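/- For all positive integers m and n, there exist languages L₁ and L₂ over a binary alphabet such that L₁ is accepted by an NFA with m states, L₂ is accepted by an NFA with n states, and every NFA accepting L₁ ←a-sdi L₂ has at least mn + 2m states. -/

import Mathlib

/-- Site-directed insertion (SDI) of string `y` into string `x`. -/
def sdiStr {α : Type} (x y : List α) : Set (List α) :=
  { w | ∃ x₁ u z v x₂ : List α,
      x = x₁ ++ u ++ v ++ x₂ ∧ y = u ++ z ++ v ∧ u ≠ [] ∧ v ≠ [] ∧
      w = x₁ ++ u ++ z ++ v ++ x₂ }

/-- Site-directed insertion extended to languages. -/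
def sdiLang {α : Type} (L₁ L₂ : Set (List α)) : Set (List α) :=
  { w | ∃ x ∈ L₁, ∃ y ∈ L₂, w ∈ sdiStr x y }

/-- Alphabetic site-directed insertion of string `y` into string `x`. -/
def asdiStr {α : Type} (x y : List α) : Set (List α) :=
  { w | ∃ (x₁ x₂ z : List α) (a b : α),
      x = x₁ ++ [a] ++ [b] ++ x₂ ∧ y = [a] ++ z ++ [b] ∧
      w = x₁ ++ [a] ++ z ++ [b] ++ x₂ }

/-- Alphabetic site-directed insertion extended to languages. -/
def asdiLang {α : Type} (L₁ L₂ : Set (List α)) : Set (List α) :=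
  { w | ∃ x ∈ L₁, ∃ y ∈ L₂, w ∈ asdiStr x y }

/-- Maximal site-directed insertion of string `y` into string `x`. -/
def maxSdiStr {α : Type} (x y : List α) : Set (List α) :=
  { w | ∃ x₁ u z v x₂ : List α,
      x = x₁ ++ u ++ v ++ x₂ ∧ y = u ++ z ++ v ∧ u ≠ [] ∧ v ≠ [] ∧
      w = x₁ ++ u ++ z ++ v ++ x₂ ∧
      ¬ ∃ x₁' x₂' z' : List α, x₁' <:+ x₁ ∧ x₂' <+: x₂ ∧
          x₁' ++ x₂' ≠ [] ∧ y = x₁' ++ u ++ z' ++ v ++ x₂' }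

/-- Maximal site-directed insertion extended to languages. -/
def maxSdiLang {α : Type} (L₁ L₂ : Set (List α)) : Set (List α) :=
  { w | ∃ x ∈ L₁, ∃ y ∈ L₂, w ∈ maxSdiStr x y }

/-- Minimal site-directed insertion of string `y` into string `x`:
the words `u` and `v` of the matched outfix must be unbordered. -/
def minSdiStr {α : Type} (x y : List α) : Set (List α) :=
  { w | ∃ x₁ u z v x₂ : List α,
      x = x₁ ++ u ++ v ++ x₂ ∧ y = u ++ z ++ v ∧ u ≠ [] ∧ v ≠ [] ∧
      w = x₁ ++ u ++ z ++ v ++ x₂ ∧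
      (∀ s : List α, s <:+ u → s ≠ [] → s ≠ u → ¬ s <+: u) ∧
      (∀ p : List α, p <+: v → p ≠ [] → p ≠ v → ¬ p <:+ v) }

/-- Minimal site-directed insertion extended to languages. -/
def minSdiLang {α : Type} (L₁ L₂ : Set (List α)) : Set (List α) :=
  { w | ∃ x ∈ L₁, ∃ y ∈ L₂, w ∈ minSdiStr x y }

namespace AsdiAux

open List

def A (k : ℕ) : List Bool := List.replicate k false
def Bb (k : ℕ) : List Bool := List.replicate k true

lemma A_add (x y : ℕ) : A (x + y) = A x ++ A y :=
  List.replicate_add x y false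
lemma Bb_add (x y : ℕ) : Bb (x + y) = Bb x ++ Bb y :=
  List.replicate_add x y true

/- ---------- generic NFA lemmas ---------- -/

variable {α : Type} {σ : Type}

lemma evalFrom_app (M : NFA α σ) (S : Set σ) (x y : List α) :
    M.evalFrom S (x ++ y) = M.evalFrom (M.evalFrom S x) y := by
  simp [NFA.evalFrom, List.foldl_append]

lemma stepSet_mono (M : NFA α σ) {S T : Set σ} (h : S ⊆ T) (c : α) :
    M.stepSet S c ⊆ M.stepSet T c := by
  intro q hq
  rw [NFA.mem_stepSet] at hq ⊢
  obtain ⟨t, ht, hq⟩ := hq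
  exact ⟨t, h ht, hq⟩

lemma evalFrom_mono (M : NFA α σ) {S T : Set σ} (h : S ⊆ T) (x : List α) :
    M.evalFrom S x ⊆ M.evalFrom T x := by
  induction x generalizing S T with
  | nil => simpa using h
  | cons c x ih =>
      show M.evalFrom (M.stepSet S c) x ⊆ M.evalFrom (M.stepSet T c) x
      exact ih (stepSet_mono M h c)

lemma exists_source (M : NFA α σ) {S : Set σ} {x : List α} {q : σ}
    (h : q ∈ M.evalFrom S x) : ∃ s ∈ S, q ∈ M.evalFrom {s} x := by
  induction x generalizing S with
  | nil => exact ⟨q, by simpa using h, by simp⟩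
  | cons c x ih =>
      have h' : q ∈ M.evalFrom (M.stepSet S c) x := h
      obtain ⟨t, ht, hq⟩ := ih h'
      rw [NFA.mem_stepSet] at ht
      obtain ⟨s, hs, hts⟩ := ht
      refine ⟨s, hs, ?_⟩
      show q ∈ M.evalFrom (M.stepSet {s} c) x
      refine evalFrom_mono M ?_ x hq
      intro r hr
      rw [NFA.mem_stepSet]
      simp only [Set.mem_singleton_iff] at hr
      subst hr
      exact ⟨s, rfl, hts⟩

lemma fooling (M : NFA α σ) [Fintype σ] (L : Language α) (hL : M.accepts = L)
    {ι : Type} [Fintype ι] (X Y : ι → List α)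
    (hdiag : ∀ k, X k ++ Y k ∈ L)
    (hcross : ∀ k k', k ≠ k' → X k ++ Y k' ∈ L → X k' ++ Y k ∈ L → False) :
    Fintype.card ι ≤ Fintype.card σ := by
  have key : ∀ k : ι, ∃ s : σ, s ∈ M.evalFrom M.start (X k) ∧
      ∃ q ∈ M.accept, q ∈ M.evalFrom {s} (Y k) := by
    intro k
    have : X k ++ Y k ∈ M.accepts := by rw [hL]; exact hdiag k
    rw [NFA.mem_accepts] at this
    obtain ⟨q, hq, hmem⟩ := this
    rw [evalFrom_app] at hmem
    obtain ⟨s, hs, hq2⟩ := exists_source M hmem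
    exact ⟨s, hs, q, hq, hq2⟩
  choose f hf1 hf2 using key
  have cross : ∀ (k k' : ι), f k = f k' → X k ++ Y k' ∈ L := by
    intro k k' hee
    rw [← hL, NFA.mem_accepts]
    obtain ⟨q, hq, hmem⟩ := hf2 k'
    have hmem' : q ∈ M.evalFrom {f k} (Y k') := by rw [hee]; exact hmem
    refine ⟨q, hq, ?_⟩
    rw [evalFrom_app]
    refine evalFrom_mono M ?_ (Y k') hmem'
    intro r hr
    simp only [Set.mem_singleton_iff] at hr
    subst hr
    exact hf1 k
  have hinj : Function.Injective f := by
    intro k k' he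
    by_contra hne
    exact hcross k k' hne (cross k k' he) (cross k' k he.symm)
  simpa using Fintype.card_le_of_injective f hinj

/- ---------- divisibility window ---------- -/

lemma window {m t : ℕ} (hm : 0 < m) (h : m ∣ t) (h0 : 0 < t) (h5 : t < 5 * m) :
    t = m ∨ t = 2 * m ∨ t = 3 * m ∨ t = 4 * m := by
  obtain ⟨c, rfl⟩ := h
  have hc5 : c < 5 := by
    by_contra hc
    push_neg at hc
    have : m * 5 ≤ m * c := Nat.mul_le_mul_left m hc
    omega
  interval_cases c <;> omega

/- ---------- run length encodings ---------- -/

def rleF : List Bool → List (Bool × ℕ)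
  | [] => []
  | c :: w =>
    match rleF w with
    | [] => [(c, 1)]
    | (d, k) :: r => if c = d then (d, k + 1) :: r else (c, 1) :: (d, k) :: r

lemma rleF_head : ∀ (w : List Bool) (d : Bool) (k : ℕ) (r : List (Bool × ℕ)),
    rleF w = (d, k) :: r → w.head? = some d := by
  intro w
  induction w with
  | nil => intro d k r h; simp [rleF] at h
  | cons c w ih =>
      intro d k r h
      rcases hw : rleF w with _ | ⟨⟨d', k'⟩, r'⟩
      · rw [rleF, hw] at h
        simp at h
        simp [h.1]
      · rw [rleF, hw] at h
        by_cases hcd : c = d'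
        · simp [hcd] at h
          simp [hcd, h.1.1]
        · simp [hcd] at h
          simp [h.1.1]

lemma rleF_cons {w : List Bool} {c : Bool} (h : w.head? ≠ some c) :
    rleF (c :: w) = (c, 1) :: rleF w := by
  rcases hw : rleF w with _ | ⟨⟨d, k⟩, r⟩
  · rw [rleF, hw]
  · have hd : w.head? = some d := rleF_head w d k r hw
    have hcd : c ≠ d := by intro hh; exact h (hh ▸ hd)
    rw [rleF, hw]
    simp [hcd]

lemma rleF_rep : ∀ (k : ℕ) (c : Bool) (w : List Bool), 0 < k → w.head? ≠ some c →
    rleF (List.replicate k c ++ w) = (c, k) :: rleF w := by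
  intro k
  induction k with
  | zero => intro c w h; omega
  | succ k ih =>
      intro c w _ hw
      rcases Nat.eq_zero_or_pos k with hk | hk
      · subst hk
        simpa [List.replicate_succ] using rleF_cons hw
      · have hrec := ih c w hk hw
        rw [List.replicate_succ, List.cons_append, rleF, hrec]
        simp

inductive IsRLE : List Bool → List (Bool × ℕ) → Prop
  | nil : IsRLE [] []
  | cons (c : Bool) (k : ℕ) (w : List Bool) (r : List (Bool × ℕ))
      (hk : 0 < k) (hne : w.head? ≠ some c) (h : IsRLE w r) :
      IsRLE (List.replicate k c ++ w) ((c, k) :: r)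

lemma isrle_eq {w : List Bool} {r : List (Bool × ℕ)} (h : IsRLE w r) : rleF w = r := by
  induction h with
  | nil => rfl
  | cons c k w r hk hne h ih => rw [rleF_rep k c w hk hne, ih]

lemma rle_unique {w : List Bool} {r r' : List (Bool × ℕ)}
    (h1 : IsRLE w r) (h2 : IsRLE w r') : r = r' := by
  rw [← isrle_eq h1, ← isrle_eq h2]


lemma evalFrom_empty (M : NFA α σ) (w : List α) : M.evalFrom ∅ w = ∅ := by
  induction w with
  | nil => rfl
  | cons c w ih =>
      show M.evalFrom (M.stepSet ∅ c) w = ∅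
      rw [NFA.stepSet_empty]; exact ih

lemma stepSet_singleton (M : NFA α σ) (s : σ) (c : α) : M.stepSet {s} c = M.step s c := by
  simp [NFA.stepSet]

/- ================= case n = 1 ================= -/

section CaseOne

variable (m : ℕ) (hm : 1 ≤ m)

def L1one (m : ℕ) : Language Bool := {w | m ∣ w.count false}
def L2one : Language Bool := {w | ∀ c ∈ w, c = true}

def M1one (m : ℕ) : NFA Bool (ZMod m) where
  step q c := if c = false then {q + 1} else {q}
  start := {0}
  accept := {0}

lemma M1one_eval (w : List Bool) : ∀ q : ZMod m,
    (M1one m).evalFrom {q} w = {q + (w.count false : ZMod m)} := by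
  induction w with
  | nil => intro q; simp
  | cons c w ih =>
      intro q
      show (M1one m).evalFrom ((M1one m).stepSet {q} c) w = _
      rw [stepSet_singleton]
      cases c
      · rw [show (M1one m).step q false = {q + 1} from rfl]
        rw [ih (q+1)]
        ·
          have : ((false :: w).count false : ZMod m) = (w.count false : ZMod m) + 1 := by
            rw [List.count_cons]
            push_cast
            simp
          rw [this]
          congr 1
          ring
      · rw [show (M1one m).step q true = {q} from rfl]
        rw [ih q]
        have : ((true :: w).count false : ZMod m) = (w.count false : ZMod m) := by
          rw [List.count_cons]
          simp
        rw [this]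

lemma M1one_accepts : (M1one m).accepts = L1one m := by
  ext w
  rw [NFA.mem_accepts]
  constructor
  · rintro ⟨S, hS, hmem⟩
    have hS0 : S = 0 := hS
    have : (M1one m).evalFrom {0} w = {(0:ZMod m) + (w.count false : ZMod m)} := M1one_eval m w 0
    rw [show (M1one m).start = {(0 : ZMod m)} from rfl, this] at hmem
    rw [hS0] at hmem
    simp only [Set.mem_singleton_iff, zero_add] at hmem
    have : ((w.count false : ℕ) : ZMod m) = 0 := hmem.symm
    rwa [ZMod.natCast_eq_zero_iff] at this
  · intro hw
    refine ⟨0, rfl, ?_⟩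
    rw [show (M1one m).start = {(0 : ZMod m)} from rfl, M1one_eval m w 0]
    simp only [Set.mem_singleton_iff, zero_add]
    symm
    rwa [ZMod.natCast_eq_zero_iff]

def M2one : NFA Bool Unit where
  step _ c := if c = true then Set.univ else ∅
  start := Set.univ
  accept := Set.univ

lemma M2one_eval (w : List Bool) :
    M2one.evalFrom Set.univ w = if (∀ c ∈ w, c = true) then Set.univ else ∅ := by
  induction w with
  | nil => simp
  | cons c w ih =>
      show M2one.evalFrom (M2one.stepSet Set.univ c) w = _
      cases c
      · have : M2one.stepSet Set.univ false = ∅ := by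
          ext u
          simp [NFA.stepSet, M2one]
        rw [this, evalFrom_empty]
        simp
      · have : M2one.stepSet Set.univ true = Set.univ := by
          ext u
          simp [NFA.stepSet, M2one]
        rw [this, ih]
        by_cases h : (∀ c ∈ w, c = true) <;> simp [h]

lemma M2one_accepts : M2one.accepts = L2one := by
  ext w
  rw [NFA.mem_accepts]
  show _ ↔ (∀ c ∈ w, c = true)
  rw [show M2one.start = Set.univ from rfl, M2one_eval]
  by_cases h : (∀ c ∈ w, c = true) <;> simp [h, M2one]

lemma char_one (W : List Bool) :
    W ∈ asdiLang (L1one m) L2one ↔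
      (m ∣ W.count false ∧ ∃ u v : List Bool, W = u ++ true :: true :: v) := by
  constructor
  · rintro ⟨x, hx, y, hy, x₁, x₂, z, c, d, hxeq, hyeq, hweq⟩
    have hc : c = true := by
      have : c ∈ y := by rw [hyeq]; simp
      exact hy c this
    have hd : d = true := by
      have : d ∈ y := by rw [hyeq]; simp
      exact hy d this
    subst hc; subst hd
    have hz : ∀ e ∈ z, e = true := by
      intro e he
      exact hy e (by rw [hyeq]; simp [he])
    have hzrep : z = List.replicate z.length true := by
      rw [List.eq_replicate_iff]
      exact ⟨rfl, hz⟩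
    constructor
    · have hcount : W.count false = x.count false := by
        rw [hweq, hxeq]
        simp only [List.count_append]
        rw [hzrep]
        simp [List.count_replicate]
      rw [hcount]
      exact hx
    · rw [hweq]
      cases z with
      | nil => exact ⟨x₁, x₂, by simp⟩
      | cons e z' =>
          have he : e = true := hz e (by simp)
          subst he
          exact ⟨x₁, z' ++ [true] ++ x₂, by simp⟩
  · rintro ⟨hdvd, u, v, hweq⟩
    refine ⟨W, ?_, [true, true], ?_, u, v, [], true, true, ?_, by simp, by simpa using hweq⟩
    · exact hdvd
    · intro c hc
      simp only [List.mem_cons, List.not_mem_nil, or_false, List.mem_singleton] at hc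
      rcases hc with h | h <;> exact h
    · simpa using hweq


lemma countF (x y y' z : ℕ) : ((A x ++ Bb y) ++ (Bb y' ++ A z)).count false = x + z := by
  simp [A, Bb, List.count_append, List.count_replicate]

lemma countT (x y y' z : ℕ) : ((A x ++ Bb y) ++ (Bb y' ++ A z)).count true = y + y' := by
  simp [A, Bb, List.count_append, List.count_replicate]

lemma two_le_countT {W u v : List Bool} (h : W = u ++ true :: true :: v) :
    2 ≤ W.count true := by
  subst h
  simp [List.count_append, List.count_cons]
  omega

lemma lower_one (σ : Type) [inst : Fintype σ] (C : NFA Bool σ)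
    (hC : C.accepts = asdiLang (L1one m) L2one) :
    m * 1 + 2 * m ≤ Fintype.card σ := by
  classical
  set L := asdiLang (L1one m) L2one with hLdef
  have hcard : m * 1 + 2 * m = Fintype.card (Fin m × Fin 3) := by
    simp [Fintype.card_prod]
    ring
  rw [hcard]
  refine fooling C L hC
    (fun p => A p.1.val ++ Bb p.2.val)
    (fun p => Bb (2 - p.2.val) ++ A (m - p.1.val)) ?_ ?_
  · rintro ⟨i, k⟩
    rw [hLdef]; refine (char_one m _).mpr ?_
    constructor
    · rw [countF]
      have : i.val + (m - i.val) = m := by omega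
      rw [this]
    · refine ⟨A i.val, A (m - i.val), ?_⟩
      have h2 : k.val + (2 - k.val) = 2 := by omega
      calc (A i.val ++ Bb k.val) ++ (Bb (2 - k.val) ++ A (m - i.val))
          = A i.val ++ (Bb (k.val + (2 - k.val)) ++ A (m - i.val)) := by
            rw [Bb_add]; simp [List.append_assoc]
        _ = A i.val ++ true :: true :: A (m - i.val) := by rw [h2]; rfl
  · rintro ⟨i, k⟩ ⟨j, k'⟩ hne h1 h2
    rw [hLdef] at h1 h2
    replace h1 := (char_one m _).mp h1
    replace h2 := (char_one m _).mp h2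
    obtain ⟨hd1, u1, v1, hf1⟩ := h1
    obtain ⟨hd2, u2, v2, hf2⟩ := h2
    rw [countF] at hd1 hd2
    have hc1 := two_le_countT hf1
    have hc2 := two_le_countT hf2
    rw [countT] at hc1 hc2
    dsimp only at hd1 hd2 hc1 hc2
    have hi : i.val < m := i.isLt
    have hj : j.val < m := j.isLt
    have hij : i = j := by
      have h0 : 0 < i.val + (m - j.val) := by omega
      have h5 : i.val + (m - j.val) < 5 * m := by omega
      rcases window (by omega) hd1 h0 h5 with h | h | h | h <;>
        · apply Fin.ext; omega
    have hkk : k = k' := by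
      have hk2 : k.val < 3 := k.isLt
      have hk2' : k'.val < 3 := k'.isLt
      apply Fin.ext
      omega
    exact hne (by rw [hij, hkk])

end CaseOne

/- ================= case n ≥ 2 ================= -/

section CaseTwo

variable (m k : ℕ)

def L1two (m : ℕ) : Language Bool := {w | (∀ c ∈ w, c = false) ∧ m ∣ w.length}

def Tok (k : ℕ) : ℕ → List Bool
  | 0 => []
  | s + 1 => (false :: Bb (k + 1)) ++ Tok k s

def L2two (k : ℕ) : Language Bool := {w | ∃ t, w = Tok k t ++ [false]}

def M1two (m : ℕ) : NFA Bool (ZMod m) where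
  step q c := if c = false then {q + 1} else ∅
  start := {0}
  accept := {0}

lemma M1two_eval (w : List Bool) : ∀ q : ZMod m,
    (M1two m).evalFrom {q} w =
      if (∀ c ∈ w, c = false) then {q + (w.length : ZMod m)} else ∅ := by
  induction w with
  | nil => intro q; simp
  | cons c w ih =>
      intro q
      show (M1two m).evalFrom ((M1two m).stepSet {q} c) w = _
      rw [stepSet_singleton]
      cases c
      · rw [show (M1two m).step q false = {q + 1} from rfl, ih (q + 1)]
        by_cases h : (∀ c ∈ w, c = false)
        · rw [if_pos h]
          have hall : (∀ c ∈ false :: w, c = false) := by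
            intro c hc
            rcases List.mem_cons.mp hc with hc' | hc'
            · exact hc'
            · exact h _ hc'
          rw [if_pos hall]
          have hlen : ((false :: w).length : ZMod m) = (w.length : ZMod m) + 1 := by
            push_cast [List.length_cons]
            ring
          rw [hlen]
          congr 1
          ring
        · rw [if_neg h]
          have hnall : ¬ (∀ c ∈ false :: w, c = false) := by
            intro hall
            exact h (fun c hc => hall c (List.mem_cons_of_mem _ hc))
          rw [if_neg hnall]
      · rw [show (M1two m).step q true = ∅ from rfl, evalFrom_empty]
        have hnall : ¬ (∀ c ∈ true :: w, c = false) := by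
          intro hall
          simpa using hall true (by simp)
        rw [if_neg hnall]

lemma M1two_accepts : (M1two m).accepts = L1two m := by
  ext w
  rw [NFA.mem_accepts]
  rw [show (M1two m).start = {(0 : ZMod m)} from rfl, M1two_eval m w 0]
  constructor
  · rintro ⟨S, hS, hmem⟩
    have hS0 : S = 0 := hS
    by_cases h : (∀ c ∈ w, c = false)
    · refine ⟨h, ?_⟩
      rw [if_pos h] at hmem
      rw [hS0] at hmem
      simp only [Set.mem_singleton_iff, zero_add] at hmem
      have : ((w.length : ℕ) : ZMod m) = 0 := hmem.symm
      rwa [ZMod.natCast_eq_zero_iff] at this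
    · rw [if_neg h] at hmem
      exact absurd hmem (Set.notMem_empty _)
  · rintro ⟨hall, hdvd⟩
    refine ⟨0, rfl, ?_⟩
    rw [if_pos hall]
    simp only [Set.mem_singleton_iff, zero_add]
    symm
    rwa [ZMod.natCast_eq_zero_iff]

def M2two (k : ℕ) : NFA Bool (ZMod (k + 2)) where
  step q c :=
    if c = false then (if q = 0 then {1} else ∅)
    else (if q = 0 then ∅ else {q + 1})
  start := {0}
  accept := {1}

lemma cast_inj_lt {a b : ℕ} (ha : a < k + 2) (hb : b < k + 2)
    (h : (a : ZMod (k + 2)) = (b : ZMod (k + 2))) : a = b := by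
  rw [ZMod.natCast_eq_natCast_iff'] at h
  rwa [Nat.mod_eq_of_lt ha, Nat.mod_eq_of_lt hb] at h

lemma cast_ne_zero {a : ℕ} (h0 : 0 < a) (ha : a < k + 2) :
    (a : ZMod (k + 2)) ≠ 0 := by
  intro h
  have := cast_inj_lt k (a := a) (b := 0) ha (by omega) (by simpa using h)
  omega

lemma M2two_B (b : ℕ) : ∀ j : ℕ, 1 ≤ j → j + b ≤ k + 2 →
    (M2two k).evalFrom {(j : ZMod (k + 2))} (Bb b) = {((j + b : ℕ) : ZMod (k + 2))} := by
  induction b with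
  | zero => intro j h1 h2; simp [Bb]
  | succ b ih =>
      intro j h1 h2
      have : Bb (b + 1) = true :: Bb b := rfl
      rw [this]
      show (M2two k).evalFrom ((M2two k).stepSet {(j : ZMod (k+2))} true) (Bb b) = _
      rw [stepSet_singleton]
      have hne : (j : ZMod (k + 2)) ≠ 0 := cast_ne_zero k (by omega) (by omega)
      rw [show (M2two k).step (j : ZMod (k+2)) true
            = (if (j : ZMod (k+2)) = 0 then ∅ else {(j : ZMod (k+2)) + 1}) from rfl,
        if_neg hne]
      have hcast : (j : ZMod (k+2)) + 1 = ((j + 1 : ℕ) : ZMod (k + 2)) := by push_cast; ring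
      rw [hcast, ih (j + 1) (by omega) (by omega)]
      have : j + 1 + b = j + (b + 1) := by omega
      rw [this]

lemma M2two_tok : ∀ t, (M2two k).evalFrom {(0 : ZMod (k + 2))} (Tok k t) = {0} := by
  intro t
  induction t with
  | zero => rfl
  | succ t ih =>
      rw [Tok, evalFrom_app]
      have h1 : (M2two k).evalFrom {(0 : ZMod (k+2))} (false :: Bb (k + 1)) = {0} := by
        show (M2two k).evalFrom ((M2two k).stepSet {(0 : ZMod (k+2))} false) (Bb (k+1)) = _
        rw [stepSet_singleton]
        rw [show (M2two k).step (0 : ZMod (k+2)) false = {1} by simp [M2two]]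
        have : ({(1 : ZMod (k+2))} : Set (ZMod (k+2))) = {((1 : ℕ) : ZMod (k+2))} := by simp
        rw [this, M2two_B k (k+1) 1 (by omega) (by omega)]
        have : ((1 + (k + 1) : ℕ) : ZMod (k + 2)) = 0 := by
          rw [ZMod.natCast_eq_zero_iff]
          exact ⟨1, by ring⟩
        rw [this]
      rw [h1, ih]

lemma M2two_sub : ∀ v : List Bool, ∀ j : ℕ, 1 ≤ j → j < k + 2 →
    (1 : ZMod (k + 2)) ∈ (M2two k).evalFrom {(j : ZMod (k + 2))} v →
    (j = 1 ∧ v = []) ∨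
      (∃ w₃, v = Bb (k + 2 - j) ++ w₃ ∧ (1 : ZMod (k+2)) ∈ (M2two k).evalFrom {0} w₃) := by
  intro v
  induction v with
  | nil =>
      intro j h1 h2 hmem
      left
      simp only [NFA.evalFrom_nil, Set.mem_singleton_iff] at hmem
      have : (1 : ℕ) = j := by
        apply cast_inj_lt k (by omega) h2
        simpa using hmem
      exact ⟨this.symm, rfl⟩
  | cons c v ih =>
      intro j h1 h2 hmem
      rw [show (c :: v) = [c] ++ v from rfl, evalFrom_app] at hmem
      rw [NFA.evalFrom_singleton, stepSet_singleton] at hmem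
      have hne : (j : ZMod (k + 2)) ≠ 0 := cast_ne_zero k (by omega) h2
      cases c
      · rw [show (M2two k).step (j : ZMod (k+2)) false
              = (if (j : ZMod (k+2)) = 0 then {1} else ∅) from rfl, if_neg hne,
          evalFrom_empty] at hmem
        exact absurd hmem (Set.notMem_empty _)
      · rw [show (M2two k).step (j : ZMod (k+2)) true
              = (if (j : ZMod (k+2)) = 0 then ∅ else {(j : ZMod (k+2)) + 1}) from rfl,
          if_neg hne] at hmem
        have hcast : (j : ZMod (k+2)) + 1 = ((j + 1 : ℕ) : ZMod (k + 2)) := by push_cast; ring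
        rw [hcast] at hmem
        by_cases hj : j + 1 = k + 2
        · right
          refine ⟨v, ?_, ?_⟩
          · have : k + 2 - j = 1 := by omega
            rw [this]
            rfl
          · have h0 : ((j + 1 : ℕ) : ZMod (k + 2)) = 0 := by
              rw [ZMod.natCast_eq_zero_iff, hj]
            rwa [h0] at hmem
        · rcases ih (j + 1) (by omega) (by omega) hmem with ⟨h1', _⟩ | ⟨w₃, hv, hw₃⟩
          · omega
          · right
            refine ⟨w₃, ?_, hw₃⟩
            rw [hv]
            have : k + 2 - j = (k + 2 - (j + 1)) + 1 := by omega
            rw [this]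
            rfl

lemma M2two_main : ∀ (L : ℕ) (w : List Bool), w.length ≤ L →
    (1 : ZMod (k + 2)) ∈ (M2two k).evalFrom {(0 : ZMod (k+2))} w →
    ∃ t, w = Tok k t ++ [false] := by
  intro L
  induction L with
  | zero =>
      intro w hlen hmem
      have : w = [] := List.length_eq_zero_iff.mp (by omega)
      subst this
      simp only [NFA.evalFrom_nil, Set.mem_singleton_iff] at hmem
      exfalso
      exact cast_ne_zero k (a := 1) (by omega) (by omega) (by simpa using hmem)
  | succ L ihL =>
      intro w hlen hmem
      cases w with
      | nil =>
          simp only [NFA.evalFrom_nil, Set.mem_singleton_iff] at hmem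
          exact absurd (by simpa using hmem) (cast_ne_zero k (a := 1) (by omega) (by omega))
      | cons c w' =>
          rw [show (c :: w') = [c] ++ w' from rfl, evalFrom_app,
            NFA.evalFrom_singleton, stepSet_singleton] at hmem
          cases c
          · rw [show (M2two k).step (0 : ZMod (k+2)) false = {1} by simp [M2two]] at hmem
            have hmem' : (1 : ZMod (k+2)) ∈ (M2two k).evalFrom {((1:ℕ) : ZMod (k+2))} w' := by
              simpa using hmem
            rcases M2two_sub k w' 1 (by omega) (by omega) hmem' with ⟨_, hv⟩ | ⟨w₃, hv, hw₃⟩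
            · subst hv
              exact ⟨0, rfl⟩
            · have hlen3 : w₃.length ≤ L := by
                have := congrArg List.length hv
                simp [Bb] at this
                simp at hlen
                omega
              obtain ⟨t, ht⟩ := ihL w₃ hlen3 hw₃
              refine ⟨t + 1, ?_⟩
              rw [hv, ht]
              have : k + 2 - 1 = k + 1 := by omega
              rw [this, Tok]
              simp
          · rw [show (M2two k).step (0 : ZMod (k+2)) true = ∅ by simp [M2two],
              evalFrom_empty] at hmem
            exact absurd hmem (Set.notMem_empty _)

lemma M2two_accepts : (M2two k).accepts = L2two k := by
  ext w
  rw [NFA.mem_accepts]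
  constructor
  · rintro ⟨S, hS, hmem⟩
    have hS1 : S = 1 := hS
    subst hS1
    exact M2two_main k w.length w le_rfl hmem
  · rintro ⟨t, rfl⟩
    refine ⟨1, rfl, ?_⟩
    rw [evalFrom_app, show (M2two k).start = {(0 : ZMod (k+2))} from rfl, M2two_tok]
    rw [NFA.evalFrom_singleton, stepSet_singleton]
    rw [show (M2two k).step (0 : ZMod (k+2)) false = {1} by simp [M2two]]
    rfl


lemma char_two (W : List Bool) :
    W ∈ asdiLang (L1two m) (L2two k) ↔
      ∃ p q s, 0 < p ∧ 0 < q ∧ m ∣ (p + q) ∧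
        W = A p ++ (Bb (k + 1) ++ (Tok k s ++ A q)) := by
  constructor
  · rintro ⟨x, ⟨hall, hdvd⟩, y, ⟨t, hyt⟩, x₁, x₂, z, c, d, hxeq, hyeq, hweq⟩
    have hc : c = false := hall c (by rw [hxeq]; simp)
    have hd : d = false := hall d (by rw [hxeq]; simp)
    subst hc; subst hd
    have hx1 : x₁ = A x₁.length := by
      rw [A]
      apply List.eq_replicate_of_mem
      intro b hb
      exact hall b (by rw [hxeq]; simp [hb])
    have hx2 : x₂ = A x₂.length := by
      rw [A]
      apply List.eq_replicate_of_mem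
      intro b hb
      exact hall b (by rw [hxeq]; simp [hb])
    cases t with
    | zero =>
        exfalso
        rw [hyt] at hyeq
        have := congrArg List.length hyeq
        simp [Tok] at this
    | succ t =>
        have hz : z = Bb (k + 1) ++ Tok k t := by
          rw [hyt] at hyeq
          rw [Tok] at hyeq
          have hyeq' : (false :: Bb (k + 1)) ++ (Tok k t ++ [false])
              = [false] ++ z ++ [false] := by
            rw [← hyeq]; simp [List.append_assoc]
          have : Bb (k + 1) ++ (Tok k t ++ [false]) = z ++ [false] := by
            have := hyeq'
            simp only [List.cons_append, List.append_assoc, List.singleton_append,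
              List.cons.injEq, true_and] at this
            simpa [List.append_assoc] using this
          have h2 : (Bb (k + 1) ++ Tok k t) ++ [false] = z ++ [false] := by
            simpa [List.append_assoc] using this
          exact (List.append_cancel_right h2).symm
        refine ⟨x₁.length + 1, x₂.length + 1, t, by omega, by omega, ?_, ?_⟩
        · have hlen := congrArg List.length hxeq
          simp at hlen
          have : x₁.length + 1 + (x₂.length + 1) = x.length := by omega
          rw [this]
          exact hdvd
        · rw [hweq, hz]
          rw [show A (x₁.length + 1) = A x₁.length ++ [false] by
            rw [A, A, List.replicate_succ']]
          rw [show A (x₂.length + 1) = [false] ++ A x₂.length by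
            rw [A, A]; rfl]
          rw [← hx1, ← hx2]
          simp [List.append_assoc]
  · rintro ⟨p, q, s, hp, hq, hdvd, hW⟩
    refine ⟨A (p + q), ⟨?_, by simp [A]; exact hdvd⟩,
      [false] ++ (Bb (k + 1) ++ Tok k s) ++ [false], ⟨s + 1, by simp [Tok, List.append_assoc]⟩,
      A (p - 1), A (q - 1), Bb (k + 1) ++ Tok k s, false, false, ?_, by simp, ?_⟩
    · intro c hc
      simp [A] at hc
      exact hc.2
    · rw [show p + q = (p - 1) + 1 + (1 + (q - 1)) by omega]
      rw [A_add, A_add, A_add]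
      simp [A, List.append_assoc]
    · rw [hW]
      rw [show A p = A (p - 1) ++ [false] by
        rw [show p = (p-1) + 1 by omega, A, A, List.replicate_succ']
        simp]
      rw [show A q = [false] ++ A (q - 1) by
        rw [show q = (q-1) + 1 by omega, A, A]
        rfl]
      simp [List.append_assoc]

/- ---------- RLE of the canonical forms ---------- -/

def RT (k : ℕ) : ℕ → ℕ → List (Bool × ℕ)
  | 0, q => [(false, q)]
  | s + 1, q => (false, 1) :: (true, k + 1) :: RT k s q

lemma RT_len : ∀ s q, (RT k s q).length = 2 * s + 1 := by
  intro s
  induction s with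
  | zero => intro q; rfl
  | succ s ih => intro q; simp [RT, ih q]; omega

lemma head_rep {j : ℕ} (hj : 0 < j) (c : Bool) (w : List Bool) :
    (List.replicate j c ++ w).head? = some c := by
  obtain ⟨j', rfl⟩ := Nat.exists_eq_succ_of_ne_zero (Nat.pos_iff_ne_zero.mp hj)
  simp [List.replicate_succ]

lemma head_A {q : ℕ} (hq : 0 < q) (w : List Bool) : (A q ++ w).head? = some false := by
  rw [A]; exact head_rep hq false w

lemma head_Bb {q : ℕ} (hq : 0 < q) (w : List Bool) : (Bb q ++ w).head? = some true := by
  rw [Bb]; exact head_rep hq true w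

lemma head_TokA {s q : ℕ} (hq : 0 < q) : (Tok k s ++ A q).head? = some false := by
  cases s with
  | zero =>
      show (A q).head? = some false
      rw [show A q = A q ++ [] by simp]
      exact head_A hq []
  | succ s =>
      rw [Tok]
      rfl

lemma isrle_TokA : ∀ s q, 0 < q → IsRLE (Tok k s ++ A q) (RT k s q) := by
  intro s
  induction s with
  | zero =>
      intro q hq
      have h := IsRLE.cons false q [] [] hq (by simp) IsRLE.nil
      show IsRLE (A q) (RT k 0 q)
      rw [show A q = List.replicate q false ++ [] by simp [A], RT]
      exact h
  | succ s ih =>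
      intro q hq
      have inner : IsRLE (Bb (k + 1) ++ (Tok k s ++ A q)) ((true, k + 1) :: RT k s q) := by
        have := IsRLE.cons true (k + 1) (Tok k s ++ A q) (RT k s q) (by omega)
          (by rw [head_TokA k hq]; simp) (ih q hq)
        rwa [show List.replicate (k+1) true = Bb (k+1) from rfl] at this
      have outer := IsRLE.cons false 1 (Bb (k + 1) ++ (Tok k s ++ A q))
        ((true, k + 1) :: RT k s q) (by omega) (by rw [head_Bb (by omega)]; simp) inner
      rw [show Tok k (s+1) ++ A q
            = List.replicate 1 false ++ (Bb (k + 1) ++ (Tok k s ++ A q)) by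
          simp [Tok, List.append_assoc], RT]
      exact outer

lemma isrle_form {p q s : ℕ} (hp : 0 < p) (hq : 0 < q) :
    IsRLE (A p ++ (Bb (k + 1) ++ (Tok k s ++ A q)))
      ((false, p) :: (true, k + 1) :: RT k s q) := by
  have inner : IsRLE (Bb (k + 1) ++ (Tok k s ++ A q)) ((true, k + 1) :: RT k s q) := by
    have := IsRLE.cons true (k + 1) (Tok k s ++ A q) (RT k s q) (by omega)
      (by rw [head_TokA k hq]; simp) (isrle_TokA k s q hq)
    rwa [show List.replicate (k+1) true = Bb (k+1) from rfl] at this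
  have outer := IsRLE.cons false p (Bb (k + 1) ++ (Tok k s ++ A q))
    ((true, k + 1) :: RT k s q) hp (by rw [head_Bb (by omega)]; simp) inner
  rwa [show List.replicate p false = A p from rfl] at outer

lemma isrle_1 {α : ℕ} (hα : 0 < α) : IsRLE (A α) [(false, α)] := by
  have h := IsRLE.cons false α [] [] hα (by simp) IsRLE.nil
  rw [show A α = List.replicate α false ++ [] by simp [A]]
  exact h

lemma isrle_3 {α β γ : ℕ} (hα : 0 < α) (hβ : 0 < β) (hγ : 0 < γ) :
    IsRLE (A α ++ (Bb β ++ A γ)) [(false, α), (true, β), (false, γ)] := by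
  have h1 : IsRLE (Bb β ++ A γ) [(true, β), (false, γ)] := by
    have := IsRLE.cons true β (A γ) [(false, γ)] hβ
      (by rw [show A γ = A γ ++ [] by simp, head_A hγ]; simp) (isrle_1 hγ)
    rwa [show List.replicate β true = Bb β from rfl] at this
  have := IsRLE.cons false α (Bb β ++ A γ) [(true, β), (false, γ)] hα
    (by rw [head_Bb hβ]; simp) h1
  rwa [show List.replicate α false = A α from rfl] at this

lemma isrle_5 {α β γ δ ε : ℕ} (hα : 0 < α) (hβ : 0 < β) (hγ : 0 < γ) (hδ : 0 < δ)
    (hε : 0 < ε) :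
    IsRLE (A α ++ (Bb β ++ (A γ ++ (Bb δ ++ A ε))))
      [(false, α), (true, β), (false, γ), (true, δ), (false, ε)] := by
  have h1 : IsRLE (A γ ++ (Bb δ ++ A ε)) [(false, γ), (true, δ), (false, ε)] :=
    isrle_3 hγ hδ hε
  have h2 : IsRLE (Bb β ++ (A γ ++ (Bb δ ++ A ε)))
      ((true, β) :: [(false, γ), (true, δ), (false, ε)]) := by
    have := IsRLE.cons true β _ _ hβ (by rw [head_A hγ]; simp) h1
    rwa [show List.replicate β true = Bb β from rfl] at this
  have := IsRLE.cons false α _ _ hα (by rw [head_Bb hβ]; simp) h2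
  rwa [show List.replicate α false = A α from rfl] at this

lemma isrle_7 {α β γ δ ε ζ η : ℕ} (hα : 0 < α) (hβ : 0 < β) (hγ : 0 < γ) (hδ : 0 < δ)
    (hε : 0 < ε) (hζ : 0 < ζ) (hη : 0 < η) :
    IsRLE (A α ++ (Bb β ++ (A γ ++ (Bb δ ++ (A ε ++ (Bb ζ ++ A η))))))
      [(false, α), (true, β), (false, γ), (true, δ), (false, ε), (true, ζ), (false, η)] := by
  have h1 := isrle_5 hγ hδ hε hζ hη
  have h2 : IsRLE (Bb β ++ (A γ ++ (Bb δ ++ (A ε ++ (Bb ζ ++ A η)))))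
      ((true, β) :: [(false, γ), (true, δ), (false, ε), (true, ζ), (false, η)]) := by
    have := IsRLE.cons true β _ _ hβ (by rw [head_A hγ]; simp) h1
    rwa [show List.replicate β true = Bb β from rfl] at this
  have := IsRLE.cons false α _ _ hα (by rw [head_Bb hβ]; simp) h2
  rwa [show List.replicate α false = A α from rfl] at this

/- ---------- info lemmas ---------- -/

lemma form_rle {W : List Bool} (h : W ∈ asdiLang (L1two m) (L2two k)) :
    ∃ p q s, 0 < p ∧ 0 < q ∧ m ∣ (p + q) ∧
      IsRLE W ((false, p) :: (true, k + 1) :: RT k s q) := by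
  rw [char_two] at h
  obtain ⟨p, q, s, hp, hq, hdvd, hW⟩ := h
  exact ⟨p, q, s, hp, hq, hdvd, hW ▸ isrle_form k hp hq⟩

lemma info1 {α : ℕ} (hα : 0 < α) (h : A α ∈ asdiLang (L1two m) (L2two k)) : False := by
  obtain ⟨p, q, s, hp, hq, hdvd, hrle⟩ := form_rle m k h
  have := rle_unique (isrle_1 hα) hrle
  have hlen := congrArg List.length this
  simp [RT_len] at hlen

lemma info3 {α β γ : ℕ} (hα : 0 < α) (hβ : 0 < β) (hγ : 0 < γ)
    (h : A α ++ (Bb β ++ A γ) ∈ asdiLang (L1two m) (L2two k)) :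
    β = k + 1 ∧ m ∣ (α + γ) := by
  obtain ⟨p, q, s, hp, hq, hdvd, hrle⟩ := form_rle m k h
  have heq := rle_unique (isrle_3 hα hβ hγ) hrle
  have hlen := congrArg List.length heq
  simp [RT_len] at hlen
  have hs : s = 0 := by omega
  subst hs
  rw [RT] at heq
  simp only [List.cons.injEq, Prod.mk.injEq] at heq
  obtain ⟨⟨_, h1⟩, ⟨_, h2⟩, ⟨_, h3⟩, _⟩ := heq
  subst h1; subst h2; subst h3
  exact ⟨rfl, hdvd⟩

lemma info5 {α β γ δ ε : ℕ} (hα : 0 < α) (hβ : 0 < β) (hγ : 0 < γ) (hδ : 0 < δ)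
    (hε : 0 < ε)
    (h : A α ++ (Bb β ++ (A γ ++ (Bb δ ++ A ε))) ∈ asdiLang (L1two m) (L2two k)) :
    β = k + 1 ∧ γ = 1 ∧ δ = k + 1 ∧ m ∣ (α + ε) := by
  obtain ⟨p, q, s, hp, hq, hdvd, hrle⟩ := form_rle m k h
  have heq := rle_unique (isrle_5 hα hβ hγ hδ hε) hrle
  have hlen := congrArg List.length heq
  simp [RT_len] at hlen
  have hs : s = 1 := by omega
  subst hs
  rw [RT, RT] at heq
  simp only [List.cons.injEq, Prod.mk.injEq] at heq
  obtain ⟨⟨_, h1⟩, ⟨_, h2⟩, ⟨_, h3⟩, ⟨_, h4⟩, ⟨_, h5⟩, _⟩ := heq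
  subst h1; subst h2; subst h3; subst h4; subst h5
  exact ⟨rfl, rfl, rfl, hdvd⟩

lemma info7 {α β γ δ ε ζ η : ℕ} (hα : 0 < α) (hβ : 0 < β) (hγ : 0 < γ) (hδ : 0 < δ)
    (hε : 0 < ε) (hζ : 0 < ζ) (hη : 0 < η)
    (h : A α ++ (Bb β ++ (A γ ++ (Bb δ ++ (A ε ++ (Bb ζ ++ A η)))))
      ∈ asdiLang (L1two m) (L2two k)) :
    β = k + 1 ∧ γ = 1 ∧ δ = k + 1 ∧ ε = 1 ∧ ζ = k + 1 ∧ m ∣ (α + η) := by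
  obtain ⟨p, q, s, hp, hq, hdvd, hrle⟩ := form_rle m k h
  have heq := rle_unique (isrle_7 hα hβ hγ hδ hε hζ hη) hrle
  have hlen := congrArg List.length heq
  simp [RT_len] at hlen
  have hs : s = 2 := by omega
  subst hs
  rw [RT, RT, RT] at heq
  simp only [List.cons.injEq, Prod.mk.injEq] at heq
  obtain ⟨⟨_, h1⟩, ⟨_, h2⟩, ⟨_, h3⟩, ⟨_, h4⟩, ⟨_, h5⟩, ⟨_, h6⟩, ⟨_, h7⟩, _⟩ := heq
  subst h1; subst h2; subst h3; subst h4; subst h5; subst h6; subst h7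
  exact ⟨rfl, rfl, rfl, rfl, rfl, hdvd⟩

/- ---------- membership lemmas ---------- -/

lemma mem_form {p q s : ℕ} (hp : 0 < p) (hq : 0 < q) (hdvd : m ∣ (p + q)) :
    A p ++ (Bb (k + 1) ++ (Tok k s ++ A q)) ∈ asdiLang (L1two m) (L2two k) :=
  (char_two m k _).mpr ⟨p, q, s, hp, hq, hdvd, rfl⟩

lemma mem3 {α γ : ℕ} (hα : 0 < α) (hγ : 0 < γ) (hdvd : m ∣ (α + γ)) :
    A α ++ (Bb (k + 1) ++ A γ) ∈ asdiLang (L1two m) (L2two k) := by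
  have := mem_form m k (s := 0) hα hγ hdvd
  simpa [Tok] using this

lemma mem5 {α ε : ℕ} (hα : 0 < α) (hε : 0 < ε) (hdvd : m ∣ (α + ε)) :
    A α ++ (Bb (k + 1) ++ (A 1 ++ (Bb (k + 1) ++ A ε)))
      ∈ asdiLang (L1two m) (L2two k) := by
  have := mem_form m k (s := 1) hα hε hdvd
  have heq : Tok k 1 ++ A ε = A 1 ++ (Bb (k + 1) ++ A ε) := by
    simp [Tok, A, List.append_assoc, List.replicate_succ]
  rw [heq] at this
  simpa [List.append_assoc] using this

lemma mem7 {α η : ℕ} (hα : 0 < α) (hη : 0 < η) (hdvd : m ∣ (α + η)) :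
    A α ++ (Bb (k + 1) ++ (A 1 ++ (Bb (k + 1) ++ (A 1 ++ (Bb (k + 1) ++ A η)))))
      ∈ asdiLang (L1two m) (L2two k) := by
  have := mem_form m k (s := 2) hα hη hdvd
  have heq : Tok k 2 ++ A η = A 1 ++ (Bb (k + 1) ++ (A 1 ++ (Bb (k + 1) ++ A η))) := by
    simp [Tok, A, List.append_assoc, List.replicate_succ]
  rw [heq] at this
  simpa [List.append_assoc] using this


/- ---------- merge lemmas ---------- -/

lemma AAm (x y : ℕ) (w : List Bool) : A x ++ (A y ++ w) = A (x + y) ++ w := by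
  rw [← List.append_assoc, ← A_add]
lemma AAm' (x y : ℕ) : A x ++ A y = A (x + y) := (A_add x y).symm
lemma BBm (x y : ℕ) (w : List Bool) : Bb x ++ (Bb y ++ w) = Bb (x + y) ++ w := by
  rw [← List.append_assoc, ← Bb_add]
lemma BBm' (x y : ℕ) : Bb x ++ Bb y = Bb (x + y) := (Bb_add x y).symm
lemma Bb_zero : Bb 0 = [] := rfl
lemma A_one : A 1 = [false] := rfl

/- ---------- the fooling set ---------- -/

def Idx (m k : ℕ) : Type := (Fin m × Fin (k + 1)) ⊕ (Fin m ⊕ (Fin m ⊕ Fin m))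

instance (m k : ℕ) : Fintype (Idx m k) := by unfold Idx; infer_instance

def XW (m k : ℕ) : Idx m k → List Bool
  | Sum.inl p => A (p.1.val + 1) ++ (Bb (k + 1) ++ (A 1 ++ Bb p.2.val))
  | Sum.inr (Sum.inl i) => A (i.val + 1)
  | Sum.inr (Sum.inr (Sum.inl i)) => A m ++ (Bb (k + 1) ++ A (i.val + 2))
  | Sum.inr (Sum.inr (Sum.inr i)) => A (i.val + 1) ++ (Bb (k + 1) ++ (A 1 ++ Bb (k + 1)))

def YW (m k : ℕ) : Idx m k → List Bool
  | Sum.inl p => Bb (k + 1 - p.2.val) ++ A (2 * m - p.1.val - 1)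
  | Sum.inr (Sum.inl i) => A (3 * m - i.val - 1) ++ (Bb (k + 1) ++ A m)
  | Sum.inr (Sum.inr (Sum.inl i)) => A (3 * m - i.val - 2)
  | Sum.inr (Sum.inr (Sum.inr i)) => A 1 ++ (Bb (k + 1) ++ A (3 * m - i.val - 1))

lemma card_Idx (m k : ℕ) : Fintype.card (Idx m k) = m * (k + 2) + 2 * m := by
  show Fintype.card ((Fin m × Fin (k + 1)) ⊕ (Fin m ⊕ (Fin m ⊕ Fin m))) = _
  simp [Fintype.card_sum, Fintype.card_prod]
  ring

lemma lower_two (hm : 1 ≤ m) (σ : Type) [inst : Fintype σ] (C : NFA Bool σ)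
    (hC : C.accepts = asdiLang (L1two m) (L2two k)) :
    m * (k + 2) + 2 * m ≤ Fintype.card σ := by
  classical
  rw [← card_Idx m k]
  refine fooling C (asdiLang (L1two m) (L2two k)) hC (XW m k) (YW m k) ?_ ?_
  · -- diagonal
    rintro (⟨i, j⟩ | i | i | i)
    · -- I
      have hi := i.isLt
      have hj := j.isLt
      have e : (j : ℕ) + (k + 1 - (j : ℕ)) = k + 1 := by omega
      have h := mem5 m k (α := (i : ℕ) + 1) (ε := 2 * m - (i : ℕ) - 1)
        (by omega) (by omega)
        (by rw [show ((i:ℕ)+1) + (2*m-(i:ℕ)-1) = 2*m by omega]; exact ⟨2, by ring⟩)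
      have e2 : XW m k (Sum.inl (i, j)) ++ YW m k (Sum.inl (i, j))
          = A ((i:ℕ)+1) ++ (Bb (k+1) ++ (A 1 ++ (Bb (k+1) ++ A (2*m-(i:ℕ)-1)))) := by
        simp only [XW, YW, List.append_assoc, BBm]
        rw [e]
      rw [e2]
      exact h
    · -- II
      have hi := i.isLt
      have h := mem3 m k (α := 3 * m) (γ := m) (by omega) (by omega) ⟨4, by ring⟩
      have e2 : XW m k (Sum.inr (Sum.inl i)) ++ YW m k (Sum.inr (Sum.inl i))
          = A (3 * m) ++ (Bb (k+1) ++ A m) := by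
        simp only [XW, YW, List.append_assoc, AAm]
        rw [show ((i:ℕ)+1) + (3*m-(i:ℕ)-1) = 3*m by omega]
      rw [e2]
      exact h
    · -- III
      have hi := i.isLt
      have h := mem3 m k (α := m) (γ := 3 * m) (by omega) (by omega) ⟨4, by ring⟩
      have e2 : XW m k (Sum.inr (Sum.inr (Sum.inl i))) ++ YW m k (Sum.inr (Sum.inr (Sum.inl i)))
          = A m ++ (Bb (k+1) ++ A (3 * m)) := by
        simp only [XW, YW, List.append_assoc, AAm, AAm']
        rw [show ((i:ℕ)+2) + (3*m-(i:ℕ)-2) = 3*m by omega]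
      rw [e2]
      exact h
    · -- IV
      have hi := i.isLt
      have h := mem7 m k (α := (i:ℕ)+1) (η := 3*m-(i:ℕ)-1) (by omega) (by omega)
        (by rw [show ((i:ℕ)+1) + (3*m-(i:ℕ)-1) = 3*m by omega]; exact ⟨3, by ring⟩)
      have e2 : XW m k (Sum.inr (Sum.inr (Sum.inr i))) ++ YW m k (Sum.inr (Sum.inr (Sum.inr i)))
          = A ((i:ℕ)+1) ++ (Bb (k+1) ++ (A 1 ++ (Bb (k+1) ++ (A 1 ++ (Bb (k+1)
              ++ A (3*m-(i:ℕ)-1)))))) := by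
        simp only [XW, YW, List.append_assoc]
      rw [e2]
      exact h
  · -- crosses
    rintro (⟨i, j⟩ | i | i | i) (⟨i', j'⟩ | i' | i' | i') hne h1 h2 <;>
        change _ ∈ (asdiLang (L1two m) (L2two k) : Set (List Bool)) at h1 h2 <;>
      [skip; skip; skip; skip; skip; skip; skip; skip; skip; skip; skip; skip;
       skip; skip; skip; skip]
    · -- I vs I
      have hi := i.isLt; have hi' := i'.isLt; have hj := j.isLt; have hj' := j'.isLt
      have h1' : A ((i:ℕ)+1) ++ (Bb (k+1) ++ (A 1 ++ (Bb ((j:ℕ) + (k+1-(j':ℕ)))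
          ++ A (2*m-(i':ℕ)-1)))) ∈ asdiLang (L1two m) (L2two k) := by
        simpa only [XW, YW, List.append_assoc, BBm] using h1
      obtain ⟨_, _, hδ, hdvd⟩ := info5 m k (by omega) (by omega) (by omega) (by omega)
        (by omega) h1'
      have hjj : (j : ℕ) = (j' : ℕ) := by omega
      have hii : (i : ℕ) = (i' : ℕ) := by
        rcases window (show 0 < m by omega) hdvd (by omega) (by omega) with h | h | h | h <;>
          omega
      exact hne (by
        apply congrArg Sum.inl
        exact Prod.ext (Fin.ext hii) (Fin.ext hjj))
    · -- I vs II : use h1 with case split on j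
      have hi := i.isLt; have hi' := i'.isLt; have hj := j.isLt
      by_cases hj0 : (j : ℕ) = 0
      · have h1' : A ((i:ℕ)+1) ++ (Bb (k+1) ++ (A (1 + (3*m-(i':ℕ)-1)) ++ (Bb (k+1)
            ++ A m))) ∈ asdiLang (L1two m) (L2two k) := by
          simpa only [XW, YW, hj0, Bb_zero, List.append_nil, List.append_assoc, AAm]
            using h1
        obtain ⟨_, hγ, _, _⟩ := info5 m k (by omega) (by omega) (by omega) (by omega)
          (by omega) h1'
        omega
      · have h1' : A ((i:ℕ)+1) ++ (Bb (k+1) ++ (A 1 ++ (Bb (j:ℕ) ++ (A (3*m-(i':ℕ)-1)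
            ++ (Bb (k+1) ++ A m))))) ∈ asdiLang (L1two m) (L2two k) := by
          simpa only [XW, YW, List.append_assoc] using h1
        obtain ⟨_, _, _, hε, _, _⟩ := info7 m k (by omega) (by omega) (by omega) (by omega)
          (by omega) (by omega) (by omega) h1'
        omega
    · -- I vs III : use h2
      have hi := i.isLt; have hi' := i'.isLt; have hj := j.isLt
      have h2' : A m ++ (Bb (k+1) ++ (A ((i':ℕ)+2) ++ (Bb (k+1-(j:ℕ))
          ++ A (2*m-(i:ℕ)-1)))) ∈ asdiLang (L1two m) (L2two k) := by
        simpa only [XW, YW, List.append_assoc] using h2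
      obtain ⟨_, hγ, _, _⟩ := info5 m k (by omega) (by omega) (by omega) (by omega)
        (by omega) h2'
      omega
    · -- I vs IV : use h2
      have hi := i.isLt; have hi' := i'.isLt; have hj := j.isLt
      have h2' : A ((i':ℕ)+1) ++ (Bb (k+1) ++ (A 1 ++ (Bb ((k+1) + (k+1-(j:ℕ)))
          ++ A (2*m-(i:ℕ)-1)))) ∈ asdiLang (L1two m) (L2two k) := by
        simpa only [XW, YW, List.append_assoc, BBm] using h2
      obtain ⟨_, _, hδ, _⟩ := info5 m k (by omega) (by omega) (by omega) (by omega)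
        (by omega) h2'
      omega
    · -- II vs I : use h2 (X_I ++ Y_II)
      have hi := i.isLt; have hi' := i'.isLt; have hj' := j'.isLt
      by_cases hj0 : (j' : ℕ) = 0
      · have h2' : A ((i':ℕ)+1) ++ (Bb (k+1) ++ (A (1 + (3*m-(i:ℕ)-1)) ++ (Bb (k+1)
            ++ A m))) ∈ asdiLang (L1two m) (L2two k) := by
          simpa only [XW, YW, hj0, Bb_zero, List.append_nil, List.append_assoc, AAm]
            using h2
        obtain ⟨_, hγ, _, _⟩ := info5 m k (by omega) (by omega) (by omega) (by omega)
          (by omega) h2'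
        omega
      · have h2' : A ((i':ℕ)+1) ++ (Bb (k+1) ++ (A 1 ++ (Bb (j':ℕ) ++ (A (3*m-(i:ℕ)-1)
            ++ (Bb (k+1) ++ A m))))) ∈ asdiLang (L1two m) (L2two k) := by
          simpa only [XW, YW, List.append_assoc] using h2
        obtain ⟨_, _, _, hε, _, _⟩ := info7 m k (by omega) (by omega) (by omega) (by omega)
          (by omega) (by omega) (by omega) h2'
        omega
    · -- II vs II
      have hi := i.isLt; have hi' := i'.isLt
      have h1' : A (((i:ℕ)+1) + (3*m-(i':ℕ)-1)) ++ (Bb (k+1) ++ A m)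
          ∈ asdiLang (L1two m) (L2two k) := by
        simpa only [XW, YW, List.append_assoc, AAm] using h1
      obtain ⟨_, hdvd⟩ := info3 m k (by omega) (by omega) (by omega) h1'
      have hii : (i : ℕ) = (i' : ℕ) := by
        rcases window (show 0 < m by omega) hdvd (by omega) (by omega) with h | h | h | h <;>
          omega
      exact hne (by
        apply congrArg Sum.inr
        apply congrArg Sum.inl
        exact Fin.ext hii)
    · -- II vs III : pure a
      have hi := i.isLt; have hi' := i'.isLt
      have h1' : A (((i:ℕ)+1) + (3*m-(i':ℕ)-2)) ∈ asdiLang (L1two m) (L2two k) := by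
        simpa only [XW, YW, AAm'] using h1
      exact info1 m k (by omega) h1'
    · -- II vs IV : use h2 (X_IV ++ Y_II)
      have hi := i.isLt; have hi' := i'.isLt
      have h2' : A ((i':ℕ)+1) ++ (Bb (k+1) ++ (A 1 ++ (Bb (k+1) ++ (A (3*m-(i:ℕ)-1)
          ++ (Bb (k+1) ++ A m))))) ∈ asdiLang (L1two m) (L2two k) := by
        simpa only [XW, YW, List.append_assoc] using h2
      obtain ⟨_, _, _, hε, _, _⟩ := info7 m k (by omega) (by omega) (by omega) (by omega)
        (by omega) (by omega) (by omega) h2'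
      omega
    · -- III vs I : use h1
      have hi := i.isLt; have hi' := i'.isLt; have hj' := j'.isLt
      have h1' : A m ++ (Bb (k+1) ++ (A ((i:ℕ)+2) ++ (Bb (k+1-(j':ℕ))
          ++ A (2*m-(i':ℕ)-1)))) ∈ asdiLang (L1two m) (L2two k) := by
        simpa only [XW, YW, List.append_assoc] using h1
      obtain ⟨_, hγ, _, _⟩ := info5 m k (by omega) (by omega) (by omega) (by omega)
        (by omega) h1'
      omega
    · -- III vs II : use h1 (X_III ++ Y_II)... X_III ++ Y_II has 5 blocks
      have hi := i.isLt; have hi' := i'.isLt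
      have h1' : A m ++ (Bb (k+1) ++ (A (((i:ℕ)+2) + (3*m-(i':ℕ)-1)) ++ (Bb (k+1)
          ++ A m))) ∈ asdiLang (L1two m) (L2two k) := by
        simpa only [XW, YW, List.append_assoc, AAm] using h1
      obtain ⟨_, hγ, _, _⟩ := info5 m k (by omega) (by omega) (by omega) (by omega)
        (by omega) h1'
      omega
    · -- III vs III
      have hi := i.isLt; have hi' := i'.isLt
      have h1' : A m ++ (Bb (k+1) ++ A (((i:ℕ)+2) + (3*m-(i':ℕ)-2)))
          ∈ asdiLang (L1two m) (L2two k) := by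
        simpa only [XW, YW, List.append_assoc, AAm'] using h1
      obtain ⟨_, hdvd⟩ := info3 m k (by omega) (by omega) (by omega) h1'
      have hii : (i : ℕ) = (i' : ℕ) := by
        rcases window (show 0 < m by omega) hdvd (by omega) (by omega) with h | h | h | h <;>
          omega
      exact hne (by
        apply congrArg Sum.inr
        apply congrArg Sum.inr
        apply congrArg Sum.inl
        exact Fin.ext hii)
    · -- III vs IV : use h1
      have hi := i.isLt; have hi' := i'.isLt
      have h1' : A m ++ (Bb (k+1) ++ (A (((i:ℕ)+2) + 1) ++ (Bb (k+1)
          ++ A (3*m-(i':ℕ)-1)))) ∈ asdiLang (L1two m) (L2two k) := by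
        simpa only [XW, YW, List.append_assoc, AAm] using h1
      obtain ⟨_, hγ, _, _⟩ := info5 m k (by omega) (by omega) (by omega) (by omega)
        (by omega) h1'
      omega
    · -- IV vs I : use h1
      have hi := i.isLt; have hi' := i'.isLt; have hj' := j'.isLt
      have h1' : A ((i:ℕ)+1) ++ (Bb (k+1) ++ (A 1 ++ (Bb ((k+1) + (k+1-(j':ℕ)))
          ++ A (2*m-(i':ℕ)-1)))) ∈ asdiLang (L1two m) (L2two k) := by
        simpa only [XW, YW, List.append_assoc, BBm] using h1
      obtain ⟨_, _, hδ, _⟩ := info5 m k (by omega) (by omega) (by omega) (by omega)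
        (by omega) h1'
      omega
    · -- IV vs II : use h1
      have hi := i.isLt; have hi' := i'.isLt
      have h1' : A ((i:ℕ)+1) ++ (Bb (k+1) ++ (A 1 ++ (Bb (k+1) ++ (A (3*m-(i':ℕ)-1)
          ++ (Bb (k+1) ++ A m))))) ∈ asdiLang (L1two m) (L2two k) := by
        simpa only [XW, YW, List.append_assoc] using h1
      obtain ⟨_, _, _, hε, _, _⟩ := info7 m k (by omega) (by omega) (by omega) (by omega)
        (by omega) (by omega) (by omega) h1'
      omega
    · -- IV vs III : use h2 (X_III ++ Y_IV)
      have hi := i.isLt; have hi' := i'.isLt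
      have h2' : A m ++ (Bb (k+1) ++ (A (((i':ℕ)+2) + 1) ++ (Bb (k+1)
          ++ A (3*m-(i:ℕ)-1)))) ∈ asdiLang (L1two m) (L2two k) := by
        simpa only [XW, YW, List.append_assoc, AAm] using h2
      obtain ⟨_, hγ, _, _⟩ := info5 m k (by omega) (by omega) (by omega) (by omega)
        (by omega) h2'
      omega
    · -- IV vs IV
      have hi := i.isLt; have hi' := i'.isLt
      have h1' : A ((i:ℕ)+1) ++ (Bb (k+1) ++ (A 1 ++ (Bb (k+1) ++ (A 1 ++ (Bb (k+1)
          ++ A (3*m-(i':ℕ)-1)))))) ∈ asdiLang (L1two m) (L2two k) := by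
        simpa only [XW, YW, List.append_assoc] using h1
      obtain ⟨_, _, _, _, _, hdvd⟩ := info7 m k (by omega) (by omega) (by omega) (by omega)
        (by omega) (by omega) (by omega) h1'
      have hii : (i : ℕ) = (i' : ℕ) := by
        rcases window (show 0 < m by omega) hdvd (by omega) (by omega) with h | h | h | h <;>
          omega
      exact hne (by
        apply congrArg Sum.inr
        apply congrArg Sum.inr
        apply congrArg Sum.inr
        exact Fin.ext hii)

end CaseTwo

end AsdiAux

/-- Lower bound `mn + 2m` for the nondeterministic state complexity of
alphabetic site-directed insertion, witnessed over a binary alphabet. -/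
theorem asdi_nfa_lower_bound (m n : ℕ) (hm : 1 ≤ m) (hn : 1 ≤ n) :
    ∃ L₁ L₂ : Language Bool,
      (∃ (σ : Type) (inst : Fintype σ) (M : NFA Bool σ),
          @Fintype.card σ inst = m ∧ M.accepts = L₁) ∧
      (∃ (σ : Type) (inst : Fintype σ) (N : NFA Bool σ),
          @Fintype.card σ inst = n ∧ N.accepts = L₂) ∧
      (∀ (σ : Type) (inst : Fintype σ) (C : NFA Bool σ),
          C.accepts = asdiLang L₁ L₂ → m * n + 2 * m ≤ @Fintype.card σ inst) := by
  classical
  haveI : NeZero m := ⟨by omega⟩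
  rcases Nat.lt_or_ge n 2 with h2 | h2
  · have hn1 : n = 1 := by omega
    subst hn1
    refine ⟨AsdiAux.L1one m, AsdiAux.L2one,
      ⟨ZMod m, inferInstance, AsdiAux.M1one m, ZMod.card m, AsdiAux.M1one_accepts m⟩,
      ⟨Unit, inferInstance, AsdiAux.M2one, by simp, AsdiAux.M2one_accepts⟩, ?_⟩
    intro σ inst C hC
    exact @AsdiAux.lower_one m σ inst C hC
  · obtain ⟨k, rfl⟩ : ∃ k, n = k + 2 := ⟨n - 2, by omega⟩
    refine ⟨AsdiAux.L1two m, AsdiAux.L2two k,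
      ⟨ZMod m, inferInstance, AsdiAux.M1two m, ZMod.card m, AsdiAux.M1two_accepts m⟩,
      ⟨ZMod (k + 2), inferInstance, AsdiAux.M2two k, ZMod.card (k + 2),
        AsdiAux.M2two_accepts k⟩, ?_⟩
    intro σ inst C hC
    exact @AsdiAux.lower_two m k hm σ inst C hC
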